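/- For every nonzero integer m, the series ∑_{n=0}^∞ m² / ( (2n − 2m + 1)² · (2n + 2m + 1)² ) converges and its sum equals π²/64. -/

import Mathlib

open Filter Topology Finset Real

lemma aux_alg (a c : ℝ) (ha : a ≠ 0) (hb : a + 4 * c ≠ 0) (hc : c ≠ 0) :
    c ^ 2 / (a ^ 2 * (a + 4 * c) ^ 2)
      = 1 / 16 * ((a ^ 2)⁻¹ + ((a + 4 * c) ^ 2)⁻¹ - (a⁻¹ - (a + 4 * c)⁻¹) / (2 * c)) := by
  have hb' : a + c * 4 ≠ 0 := by rwa [mul_comm 4 c] at hb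
  field_simp
  ring

set_option maxHeartbeats 1000000 in
lemma odd_sq_hasSum : HasSum (fun n : ℕ => (1:ℝ) / (2 * (n:ℝ) + 1) ^ 2) (π ^ 2 / 8) := by
  have h6 : HasSum (fun n : ℕ => (1:ℝ) / (n : ℝ) ^ 2) (π ^ 2 / 6) := hasSum_zeta_two
  have he : HasSum (fun n : ℕ => (1:ℝ) / ((2 * n : ℕ) : ℝ) ^ 2) (π ^ 2 / 6 / 4) := by
    have := h6.mul_left (1/4 : ℝ)
    have heq : (fun n : ℕ => (1:ℝ) / ((2 * n : ℕ) : ℝ) ^ 2)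
        = fun n : ℕ => (1/4 : ℝ) * ((1:ℝ) / (n : ℝ) ^ 2) := by
      funext n
      rcases Nat.eq_zero_or_pos n with rfl | hn
      · simp
      · have : (n : ℝ) ≠ 0 := Nat.cast_ne_zero.mpr hn.ne'
        push_cast
        field_simp
        ring
    rw [heq]
    convert this using 1
    · rfl
    ring
  have hosumm : Summable (fun n : ℕ => (1:ℝ) / ((2 * n + 1 : ℕ) : ℝ) ^ 2) :=
    h6.summable.comp_injective (fun a b h => by omega)
  have ho := hosumm.hasSum
  have htot := HasSum.even_add_odd (f := fun n : ℕ => (1:ℝ) / (n : ℝ) ^ 2) he ho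
  have huniq := htot.unique h6
  have hval : (∑' n : ℕ, (1:ℝ) / ((2 * n + 1 : ℕ) : ℝ) ^ 2) = π ^ 2 / 8 := by linarith
  rw [hval] at ho
  convert ho using 2 with n
  push_cast
  ring

set_option maxHeartbeats 1000000 in
lemma key_hasSum (k : ℕ) (hk : 0 < k) :
    HasSum (fun n : ℕ =>
        ((k:ℝ)) ^ 2 / ((2 * (n : ℝ) - 2 * (k : ℝ) + 1) ^ 2 * (2 * (n : ℝ) + 2 * (k : ℝ) + 1) ^ 2))
      (π ^ 2 / 64) := by
  have hk0 : (k : ℝ) ≠ 0 := Nat.cast_ne_zero.mpr hk.ne'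
  set u : ℕ → ℝ := fun n => (2 * (n : ℝ) - 2 * (k : ℝ) + 1)⁻¹ with hu
  set g : ℕ → ℝ := fun n => ((2 * (n : ℝ) - 2 * (k : ℝ) + 1) ^ 2)⁻¹ with hg
  set h : ℕ → ℝ := fun n => ((2 * (n : ℝ) + 2 * (k : ℝ) + 1) ^ 2)⁻¹ with hh
  have hD1 : ∀ n : ℕ, (2 * (n : ℝ) - 2 * (k : ℝ) + 1) ≠ 0 := by
    intro n hcon
    have h1 : ((2 * (n:ℤ) - 2 * (k:ℤ) + 1 : ℤ) : ℝ) = 0 := by push_cast; linarith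
    have h2 : (2 * (n:ℤ) - 2 * (k:ℤ) + 1 : ℤ) = 0 := by exact_mod_cast h1
    omega
  have hD2 : ∀ n : ℕ, (2 * (n : ℝ) + 2 * (k : ℝ) + 1) ≠ 0 := by
    intro n
    positivity
  set S : ℝ := ∑ i ∈ range k, (1:ℝ) / (2 * (i : ℝ) + 1) ^ 2 with hS
  -- sum of g
  have HGshift : HasSum (fun n : ℕ => g (n + k)) (π ^ 2 / 8) := by
    convert odd_sq_hasSum using 2 with n
    simp only [hg]
    push_cast
    rw [one_div]
    ring_nf
  have HG : HasSum g (π ^ 2 / 8 + S) := by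
    have := (hasSum_nat_add_iff (f := g) k).1 HGshift
    convert this using 2
    · rfl
    rw [hS, ← Finset.sum_range_reflect g k]
    apply Finset.sum_congr rfl
    intro i hi
    rw [Finset.mem_range] at hi
    have hcast : ((k - 1 - i : ℕ) : ℝ) = (k : ℝ) - 1 - (i : ℝ) := by
      have h1 : (k - 1 - i : ℕ) = k - (i + 1) := by omega
      rw [h1, Nat.cast_sub (by omega)]
      push_cast
      ring
    simp only [hg, hcast, one_div]
    congr 1
    ring
  -- sum of h
  have HH : HasSum h (π ^ 2 / 8 - S) := by
    have := (hasSum_nat_add_iff' (f := fun n : ℕ => (1:ℝ) / (2 * (n:ℝ) + 1) ^ 2) k).2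
      odd_sq_hasSum
    convert this using 2 with n
    · rfl
    simp only [hh]
    push_cast
    rw [one_div]
    ring_nf
  -- the telescoping sum
  have huv : ∀ n : ℕ, u (n + 2 * k) = (2 * (n : ℝ) + 2 * (k : ℝ) + 1)⁻¹ := by
    intro n
    simp only [hu]
    push_cast
    ring_nf
  have hid : ∀ n : ℕ, u n - u (n + 2 * k)
      = 2 * (2 * (k:ℝ)) * (u n * u (n + 2 * k)) := by
    intro n
    rw [huv n]
    simp only [hu]
    have hD1' : 2 * ((n:ℝ) - k) + 1 ≠ 0 := by intro h0; apply hD1 n; linarith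
    field_simp [hD1 n, hD2 n]
    ring
  have hbound : ∀ n : ℕ, |u n - u (n + 2 * k)| ≤ (2 * (k:ℝ)) * (g n + h n) := by
    intro n
    have hk1 : (0:ℝ) < (k:ℝ) := by positivity
    rw [hid n, huv n]
    simp only [hu, hg, hh]
    set a := (2 * (n : ℝ) - 2 * (k : ℝ) + 1)⁻¹ with ha
    set b := (2 * (n : ℝ) + 2 * (k : ℝ) + 1)⁻¹ with hb
    rw [← inv_pow, ← inv_pow, ← ha, ← hb]
    rw [abs_mul, abs_of_nonneg (by positivity : (0:ℝ) ≤ 2 * (2 * (k:ℝ))), abs_mul]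
    nlinarith [sq_nonneg (|a| - |b|), abs_nonneg a, abs_nonneg b, sq_abs a, sq_abs b]
  have hsummt : Summable (fun n : ℕ => u n - u (n + 2 * k)) := by
    rw [← summable_abs_iff]
    exact Summable.of_nonneg_of_le (fun n => abs_nonneg _) hbound
      ((HG.summable.add HH.summable).mul_left _)
  have h0 : ∑ n ∈ range (2 * k), u n = 0 := by
    have hrefl := Finset.sum_range_reflect u (2 * k)
    have hneg : ∀ j ∈ range (2 * k), u (2 * k - 1 - j) = - u j := by
      intro j hj
      rw [Finset.mem_range] at hj
      have hcast : ((2 * k - 1 - j : ℕ) : ℝ) = 2 * (k : ℝ) - 1 - (j : ℝ) := by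
        have h1 : (2 * k - 1 - j : ℕ) = 2 * k - (j + 1) := by omega
        rw [h1, Nat.cast_sub (by omega)]
        push_cast
        ring
      simp only [hu, hcast]
      rw [← inv_neg]
      congr 1
      ring
    rw [Finset.sum_congr rfl hneg, Finset.sum_neg_distrib] at hrefl
    linarith
  have hps : ∀ N : ℕ, ∑ n ∈ range N, (u n - u (n + 2 * k))
      = - ∑ i ∈ range (2 * k), u (N + i) := by
    intro N
    rw [Finset.sum_sub_distrib]
    have e1 : ∑ n ∈ range (2 * k + N), u n
        = (∑ n ∈ range (2 * k), u n) + ∑ n ∈ range N, u (2 * k + n) :=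
      Finset.sum_range_add u (2 * k) N
    have e2 : ∑ n ∈ range (N + 2 * k), u n
        = (∑ n ∈ range N, u n) + ∑ i ∈ range (2 * k), u (N + i) :=
      Finset.sum_range_add u N (2 * k)
    have e3 : ∑ n ∈ range N, u (n + 2 * k) = ∑ n ∈ range N, u (2 * k + n) := by
      apply Finset.sum_congr rfl
      intro i _
      rw [add_comm]
    rw [e3]
    have e4 : (2 : ℕ) * k + N = N + 2 * k := by omega
    rw [e4] at e1
    rw [e2] at e1
    rw [h0] at e1
    linarith
  have HT : HasSum (fun n : ℕ => u n - u (n + 2 * k)) 0 := by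
    rw [hsummt.hasSum_iff_tendsto_nat]
    have : (fun N : ℕ => ∑ n ∈ range N, (u n - u (n + 2 * k)))
        = fun N : ℕ => - ∑ i ∈ range (2 * k), u (N + i) := by
      funext N; exact hps N
    rw [this]
    rw [← neg_zero]
    apply Filter.Tendsto.neg
    have : (0 : ℝ) = ∑ _i ∈ range (2 * k), (0:ℝ) := by simp
    rw [this]
    apply tendsto_finset_sum
    intro i _
    have hlin : Tendsto (fun N : ℕ => 2 * (N : ℝ) + (2 * (i:ℝ) - 2 * (k:ℝ) + 1)) atTop atTop := by
      apply Filter.tendsto_atTop_add_const_right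
      exact (tendsto_natCast_atTop_atTop (R := ℝ)).const_mul_atTop two_pos
    have := tendsto_inv_atTop_zero.comp hlin
    convert this using 2 with N
    simp only [hu, Function.comp]
    push_cast
    ring_nf
  -- combine
  have Hmain := ((HG.add HH).sub (HT.div_const (2 * (k:ℝ)))).mul_left (1/16 : ℝ)
  have hsum_eq : (1/16 : ℝ) * ((π ^ 2 / 8 + S + (π ^ 2 / 8 - S)) - 0 / (2 * (k:ℝ)))
      = π ^ 2 / 64 := by
    field_simp
    ring
  rw [hsum_eq] at Hmain
  have hfun : ∀ n : ℕ,
      ((k:ℝ)) ^ 2 / ((2 * (n : ℝ) - 2 * (k : ℝ) + 1) ^ 2 * (2 * (n : ℝ) + 2 * (k : ℝ) + 1) ^ 2)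
      = 1 / 16 * (g n + h n - (u n - u (n + 2 * k)) / (2 * (k:ℝ))) := by
    intro n
    rw [huv n]
    simp only [hg, hh, hu]
    have e2 : 2 * (n:ℝ) + 2 * (k:ℝ) + 1 = (2 * (n:ℝ) - 2 * (k:ℝ) + 1) + 4 * (k:ℝ) := by ring
    rw [e2]
    exact aux_alg _ _ (hD1 n) (by rw [← e2]; exact hD2 n) hk0
  have hfeq : (fun n : ℕ =>
      ((k:ℝ)) ^ 2 / ((2 * (n : ℝ) - 2 * (k : ℝ) + 1) ^ 2 * (2 * (n : ℝ) + 2 * (k : ℝ) + 1) ^ 2))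
      = fun n : ℕ => 1 / 16 * (g n + h n - (u n - u (n + 2 * k)) / (2 * (k:ℝ))) :=
    funext hfun
  rw [hfeq]
  exact Hmain

theorem stmt_19 (m : ℤ) (hm : m ≠ 0) :
    HasSum (fun n : ℕ =>
        (m : ℝ) ^ 2 / ((2 * (n : ℝ) - 2 * (m : ℝ) + 1) ^ 2 * (2 * (n : ℝ) + 2 * (m : ℝ) + 1) ^ 2))
      (Real.pi ^ 2 / 64) := by
  have hk : 0 < m.natAbs := Int.natAbs_pos.mpr hm
  have H := key_hasSum m.natAbs hk
  rcases le_or_gt 0 m with hcase | hcase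
  · have hcast : (m : ℝ) = (m.natAbs : ℝ) := by
      rw [Nat.cast_natAbs]
      rw [_root_.abs_of_nonneg hcase]
    simp only [hcast]
    exact H
  · have hcast : (m : ℝ) = -(m.natAbs : ℝ) := by
      rw [Nat.cast_natAbs]
      rw [_root_.abs_of_neg hcase]
      push_cast
      ring
    have heq : (fun n : ℕ =>
        (m : ℝ) ^ 2 / ((2 * (n : ℝ) - 2 * (m : ℝ) + 1) ^ 2 * (2 * (n : ℝ) + 2 * (m : ℝ) + 1) ^ 2))
        = fun n : ℕ =>
        ((m.natAbs : ℝ)) ^ 2 / ((2 * (n : ℝ) - 2 * (m.natAbs : ℝ) + 1) ^ 2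
          * (2 * (n : ℝ) + 2 * (m.natAbs : ℝ) + 1) ^ 2) := by
      funext n
      rw [hcast]
      ring
    rw [heq]
    exact H
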